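/- Let F : X × X → X be associative and quasitrivial and assume X is finite. Then F is ≤-preserving for some total ordering ≤ on X if and only if the weak ordering ≾_F is 2-quasilinear, i.e., every ∼_F-class that is not minimal for ≾_F has at most two elements. -/

import Mathlib

def Assoc {X : Type*} (F : X → X → X) : Prop :=
  ∀ x y z, F (F x y) z = F x (F y z)

def Quasitrivial {X : Type*} (F : X → X → X) : Prop :=
  ∀ x y, F x y = x ∨ F x y = y

/-- The weak ordering associated with `F`: `x ≾_F y` iff `F x y = y` or `F y x = y`. -/
def wle {X : Type*} (F : X → X → X) (x y : X) : Prop :=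
  F x y = y ∨ F y x = y

/-- Strict part of a weak ordering `R`. -/
def SLT {X : Type*} (R : X → X → Prop) (x y : X) : Prop := R x y ∧ ¬ R y x

/-- Symmetric part of a weak ordering `R`. -/
def SIM {X : Type*} (R : X → X → Prop) (x y : X) : Prop := R x y ∧ R y x

/-- A weak ordering is 2-quasilinear if there are no pairwise distinct `a,b,c,d`
with `a ≺ b ∼ c ∼ d`. -/
def TwoQuasilinear {X : Type*} (R : X → X → Prop) : Prop :=
  ¬ ∃ a b c d : X, (a ≠ b ∧ a ≠ c ∧ a ≠ d ∧ b ≠ c ∧ b ≠ d ∧ c ≠ d) ∧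
      SLT R a b ∧ SIM R b c ∧ SIM R c d

section Basic
variable {X : Type*} {F : X → X → X}

lemma idem (hQ : Quasitrivial F) (x : X) : F x x = x := by rcases hQ x x with h | h <;> exact h

lemma wle_refl (hQ : Quasitrivial F) (x : X) : wle F x x := Or.inl (idem hQ x)

lemma wle_total (hQ : Quasitrivial F) (x y : X) : wle F x y ∨ wle F y x := by
  rcases hQ x y with h | h
  · exact Or.inr (Or.inr h)
  · exact Or.inl (Or.inl h)

lemma wle_trans (hA : Assoc F) (hQ : Quasitrivial F) {x y z : X}
    (h1 : wle F x y) (h2 : wle F y z) : wle F x z := by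
  rcases h1 with h1 | h1 <;> rcases h2 with h2 | h2
  · left; rw [← h2, ← hA, h1, h2]
  · rcases hQ z x with h3 | h3
    · exact Or.inr h3
    · have h5 := hA z x y
      rw [h3, h1, h2] at h5
      subst h5
      exact Or.inl h1
  · rcases hQ z x with h3 | h3
    · exact Or.inr h3
    · have h5 := hA y z x
      rw [h2, h3, h1] at h5
      subst h5
      exact Or.inl h2
  · have h5 := hA z y x
    rw [h2, h1, h2] at h5
    exact Or.inr h5
lemma lt_absorb (hQ : Quasitrivial F) {x y : X}
    (h1 : wle F x y) (h2 : ¬ wle F y x) : F x y = y ∧ F y x = y := by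
  constructor
  · rcases hQ x y with h | h
    · exact absurd (Or.inr h) h2
    · exact h
  · rcases hQ y x with h | h
    · exact h
    · exact absurd (Or.inl h) h2

/-- for `x ∼ y`, `F` acts on the pair as second projection or first projection. -/
lemma sim_pair (hQ : Quasitrivial F) {x y : X}
    (h1 : wle F x y) (h2 : wle F y x) :
    (F x y = y ∧ F y x = x) ∨ (F x y = x ∧ F y x = y) := by
  rcases hQ x y with h | h <;> rcases hQ y x with h' | h'
  · -- F x y = x, F y x = y
    exact Or.inr ⟨h, h'⟩
  · -- F x y = x, F y x = x
    have hxy : x = y := by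
      rcases h1 with h1 | h1
      · rw [h] at h1; exact h1
      · rw [h'] at h1; exact h1
    subst hxy
    exact Or.inl ⟨h, h'⟩
  · -- F x y = y, F y x = y
    have hxy : y = x := by
      rcases h2 with h2 | h2
      · rw [h'] at h2; exact h2
      · rw [h] at h2; exact h2
    subst hxy
    exact Or.inl ⟨h, h'⟩
  · exact Or.inl ⟨h, h'⟩

/-- mixed projection types on a triple inside one `∼`-class are impossible -/
lemma no_mix (hA : Assoc F) (hQ : Quasitrivial F) {p q r : X}
    (hpq : p ≠ q) (hqr : q ≠ r)
    (hP : F p q = q ∧ F q p = p) (hQ' : F q r = q ∧ F r q = r)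
    (h1 : wle F p r) (h2 : wle F r p) : False := by
  rcases sim_pair hQ h1 h2 with ⟨e1, e2⟩ | ⟨e1, e2⟩
  · -- F p r = r, F r p = p
    have h5 := hA q p r
    rw [hP.2, e1, hQ'.1] at h5
    exact hqr h5.symm
  · -- F p r = p, F r p = r
    have h5 := hA q r p
    rw [hQ'.1, hP.2, e2, hQ'.1] at h5
    exact hpq h5
lemma class_proj (hA : Assoc F) (hQ : Quasitrivial F) {s : Finset X}
    (hs : ∀ x ∈ s, ∀ y ∈ s, wle F x y) :
    (∀ x ∈ s, ∀ y ∈ s, F x y = x) ∨ (∀ x ∈ s, ∀ y ∈ s, F x y = y) := by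
  by_cases h1 : ∀ x ∈ s, ∀ y ∈ s, F x y = x
  · exact Or.inl h1
  push_neg at h1
  obtain ⟨a, ha, b, hb, hab'⟩ := h1
  have hFab : F a b = b := (hQ a b).resolve_left hab'
  have hab : a ≠ b := by rintro rfl; exact hab' (idem hQ a)
  have hPab : F a b = b ∧ F b a = a := by
    rcases sim_pair hQ (hs a ha b hb) (hs b hb a ha) with h | h
    · exact h
    · exact absurd h.1 hab'
  right
  intro x hx y hy
  by_cases hxy : x = y
  · subst hxy; exact idem hQ x
  rcases sim_pair hQ (hs x hx y hy) (hs y hy x hx) with h | h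
  · exact h.1
  exfalso
  by_cases h1 : x = a
  · subst h1
    by_cases h2 : y = b
    · subst h2; exact hab' h.1
    · exact no_mix hA hQ hab.symm hxy ⟨hPab.2, hPab.1⟩ ⟨h.1, h.2⟩
        (hs b hb y hy) (hs y hy b hb)
  · by_cases h2 : y = b
    · subst h2
      exact no_mix hA hQ hab (Ne.symm hxy) hPab ⟨h.2, h.1⟩ (hs a ha x hx) (hs x hx a ha)
    · by_cases h3 : y = a
      · subst h3
        exact no_mix hA hQ hab.symm (Ne.symm h1) ⟨hPab.2, hPab.1⟩ ⟨h.2, h.1⟩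
          (hs b hb x hx) (hs x hx b hb)
      · by_cases h4 : x = b
        · subst h4
          exact no_mix hA hQ hab hxy hPab ⟨h.1, h.2⟩ (hs a ha y hy) (hs y hy a ha)
        · rcases sim_pair hQ (hs b hb x hx) (hs x hx b hb) with hbx | hbx
          · exact no_mix hA hQ (Ne.symm h4) hxy ⟨hbx.1, hbx.2⟩ ⟨h.1, h.2⟩
              (hs b hb y hy) (hs y hy b hb)
          · exact no_mix hA hQ hab (Ne.symm h4) hPab ⟨hbx.1, hbx.2⟩
              (hs a ha x hx) (hs x hx a ha)

lemma exists_max (hA : Assoc F) (hQ : Quasitrivial F) {s : Finset X} (hne : s.Nonempty) :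
    ∃ t ∈ s, ∀ x ∈ s, wle F x t := by
  classical
  induction s using Finset.induction_on with
  | empty => exact absurd hne (by simp)
  | @insert a s ha ih =>
    rcases s.eq_empty_or_nonempty with rfl | hs
    · exact ⟨a, by simp, by simp [wle_refl hQ]⟩
    · obtain ⟨t, ht, hmax⟩ := ih hs
      rcases wle_total hQ a t with h | h
      · refine ⟨t, Finset.mem_insert_of_mem ht, ?_⟩
        intro x hx
        rcases Finset.mem_insert.mp hx with rfl | hx
        · exact h
        · exact hmax x hx
      · refine ⟨a, Finset.mem_insert_self a s, ?_⟩
        intro x hx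
        rcases Finset.mem_insert.mp hx with rfl | hx
        · exact wle_refl hQ x
        · exact wle_trans hA hQ (hmax x hx) h
end Basic

noncomputable def sqz (q : ℚ) : ℚ := q / (1 + |q|)

lemma sqz_strictMono : StrictMono sqz := by
  intro a b hab
  unfold sqz
  rw [div_lt_div_iff₀ (by positivity) (by positivity)]
  rcases abs_cases a with ⟨ha, ha'⟩ | ⟨ha, ha'⟩ <;>
    rcases abs_cases b with ⟨hb, hb'⟩ | ⟨hb, hb'⟩ <;> nlinarith

lemma sqz_mem : ∀ q : ℚ, sqz q ∈ Set.Ioo (-1 : ℚ) 1 := by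
  intro q
  have h1 : (0:ℚ) < 1 + |q| := by positivity
  unfold sqz
  constructor
  · rw [lt_div_iff₀ h1]
    cases abs_cases q with
    | inl h => nlinarith [h.1, h.2]
    | inr h => nlinarith [h.1, h.2]
  · rw [div_lt_one h1]
    cases abs_cases q with
    | inl h => nlinarith [h.1, h.2]
    | inr h => nlinarith [h.1, h.2]

lemma sqz_le_iff {a b : ℚ} : sqz a ≤ sqz b ↔ a ≤ b := sqz_strictMono.le_iff_le



def GoodOn {X : Type*} (F : X → X → X) (s : Finset X) (f : X → ℚ) : Prop :=
  Set.InjOn f ↑s ∧ (∀ x ∈ s, f x ∈ Set.Ioo (-1:ℚ) 1) ∧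
  ∀ x ∈ s, ∀ x' ∈ s, ∀ y ∈ s, ∀ y' ∈ s,
    f x ≤ f x' → f y ≤ f y' → f (F x y) ≤ f (F x' y')

section Steps
variable {X : Type*} {F : X → X → X}

/-- induction step when the top class is a singleton `{t}` -/
lemma step_top1 [DecidableEq X] (hQ : Quasitrivial F) {s : Finset X} {t : X} (hts : t ∈ s)
    (hb : ∀ w ∈ s, F t w = t ∧ F w t = t)
    {f' : X → ℚ} (hgood : GoodOn F (s.erase t) f') :
    ∃ f : X → ℚ, GoodOn F s f := by
  classical
  obtain ⟨hinj', hmem', hmono'⟩ := hgood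
  set raw : X → ℚ := fun x => if x = t then 1 else f' x with hraw
  have hrawt : raw t = 1 := by simp [hraw]
  have hrawne : ∀ z, z ≠ t → raw z = f' z := by intro z hz; simp [hraw, hz]
  have hmem2 : ∀ z ∈ s, z ≠ t → raw z ∈ Set.Ioo (-1:ℚ) 1 := by
    intro z hz hzt
    rw [hrawne z hzt]
    exact hmem' z (Finset.mem_erase.mpr ⟨hzt, hz⟩)
  have hle1 : ∀ z ∈ s, raw z ≤ 1 := by
    intro z hz
    by_cases hzt : z = t
    · subst hzt; rw [hrawt]
    · exact (hmem2 z hz hzt).2.le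
  have hFmem : ∀ x y : X, x ∈ s → y ∈ s → F x y ∈ s := by
    intro x y hx hy
    rcases hQ x y with h | h <;> rw [h] <;> assumption
  refine ⟨fun x => sqz (raw x), ?_, fun z hz => sqz_mem _, ?_⟩
  · -- injective
    intro x hx y hy hxy
    simp only at hxy
    have hxy' : raw x = raw y := sqz_strictMono.injective hxy
    by_cases h1 : x = t <;> by_cases h2 : y = t
    · rw [h1, h2]
    · rw [h1, hrawt] at hxy'
      exact absurd hxy'.symm (ne_of_lt (hmem2 y hy h2).2)
    · rw [h2, hrawt] at hxy'
      exact absurd hxy' (ne_of_lt (hmem2 x hx h1).2)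
    · rw [hrawne x h1, hrawne y h2] at hxy'
      exact hinj' (Finset.mem_coe.mpr (Finset.mem_erase.mpr ⟨h1, hx⟩))
        (Finset.mem_coe.mpr (Finset.mem_erase.mpr ⟨h2, hy⟩)) hxy'
  · -- monotone
    intro x hx x' hx' y hy y' hy' h1 h2
    rw [sqz_le_iff] at h1 h2 ⊢
    by_cases hc1 : F x' y' = t
    · rw [hc1, hrawt]; exact hle1 _ (hFmem x y hx hy)
    have hx't : x' ≠ t := by rintro rfl; exact hc1 (hb y' hy').1
    have hy't : y' ≠ t := by rintro rfl; exact hc1 (hb x' hx').2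
    have hxt : x ≠ t := by
      rintro rfl
      rw [hrawt, hrawne x' hx't] at h1
      exact absurd h1 (not_le.mpr (hmem' x' (Finset.mem_erase.mpr ⟨hx't, hx'⟩)).2)
    have hyt : y ≠ t := by
      rintro rfl
      rw [hrawt, hrawne y' hy't] at h2
      exact absurd h2 (not_le.mpr (hmem' y' (Finset.mem_erase.mpr ⟨hy't, hy'⟩)).2)
    have hFxyt : F x y ≠ t := by
      rcases hQ x y with h | h <;> rw [h] <;> assumption
    have hFx'y's : F x' y' ∈ s := hFmem x' y' hx' hy'
    rw [hrawne _ hFxyt, hrawne _ hc1]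
    rw [hrawne x hxt, hrawne x' hx't] at h1
    rw [hrawne y hyt, hrawne y' hy't] at h2
    exact hmono' x (Finset.mem_erase.mpr ⟨hxt, hx⟩) x' (Finset.mem_erase.mpr ⟨hx't, hx'⟩)
      y (Finset.mem_erase.mpr ⟨hyt, hy⟩) y' (Finset.mem_erase.mpr ⟨hy't, hy'⟩) h1 h2

/-- induction step when the top class is `{u, v}` -/
lemma step_top2 [DecidableEq X] (hQ : Quasitrivial F) {s : Finset X} {u v : X}
    (hus : u ∈ s) (hvs : v ∈ s) (huv : u ≠ v)
    (hb : ∀ w ∈ s, w ≠ u → w ≠ v → (F w u = u ∧ F u w = u) ∧ (F w v = v ∧ F v w = v))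
    {f' : X → ℚ} (hgood : GoodOn F ((s.erase u).erase v) f') :
    ∃ f : X → ℚ, GoodOn F s f := by
  obtain ⟨hinj', hmem', hmono'⟩ := hgood
  -- the four "absorption" facts
  have k1 : ∀ w ∈ s, F u w = u ∨ F u w = v := by
    intro w hw
    by_cases h1 : w = u
    · subst w; exact Or.inl (idem hQ u)
    by_cases h2 : w = v
    · subst w; exact hQ u v
    · exact Or.inl ((hb w hw h1 h2).1).2
  have k2 : ∀ w ∈ s, F w u = u ∨ F w u = v := by
    intro w hw
    by_cases h1 : w = u
    · subst w; exact Or.inl (idem hQ u)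
    by_cases h2 : w = v
    · subst w; rcases hQ v u with h | h
      · exact Or.inr h
      · exact Or.inl h
    · exact Or.inl ((hb w hw h1 h2).1).1
  have k3 : ∀ w ∈ s, F v w = v ∨ F v w = u := by
    intro w hw
    by_cases h2 : w = v
    · subst w; exact Or.inl (idem hQ v)
    by_cases h1 : w = u
    · subst w; rcases hQ v u with h | h
      · exact Or.inl h
      · exact Or.inr h
    · exact Or.inl ((hb w hw h1 h2).2).2
  have k4 : ∀ w ∈ s, F w v = v ∨ F w v = u := by
    intro w hw
    by_cases h2 : w = v
    · subst w; exact Or.inl (idem hQ v)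
    by_cases h1 : w = u
    · subst w; rcases hQ u v with h | h
      · exact Or.inr h
      · exact Or.inl h
    · exact Or.inl ((hb w hw h1 h2).2).1
  set raw : X → ℚ := fun x => if x = u then -1 else if x = v then 1 else f' x with hraw
  have hrawu : raw u = -1 := by simp [hraw]
  have hrawv : raw v = 1 := by simp [hraw, huv.symm]
  have hrawne : ∀ z, z ≠ u → z ≠ v → raw z = f' z := by
    intro z h1 h2; simp [hraw, h1, h2]
  have hmemer : ∀ z ∈ s, z ≠ u → z ≠ v → z ∈ (s.erase u).erase v := by
    intro z hz h1 h2
    exact Finset.mem_erase.mpr ⟨h2, Finset.mem_erase.mpr ⟨h1, hz⟩⟩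
  have hmem2 : ∀ z ∈ s, z ≠ u → z ≠ v → raw z ∈ Set.Ioo (-1:ℚ) 1 := by
    intro z hz h1 h2
    rw [hrawne z h1 h2]
    exact hmem' z (hmemer z hz h1 h2)
  have hle1 : ∀ z ∈ s, raw z ≤ 1 := by
    intro z hz
    by_cases h2 : z = v
    · subst z; rw [hrawv]
    by_cases h1 : z = u
    · subst z; rw [hrawu]; norm_num
    · exact (hmem2 z hz h1 h2).2.le
  have hge1 : ∀ z ∈ s, -1 ≤ raw z := by
    intro z hz
    by_cases h1 : z = u
    · subst z; rw [hrawu]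
    by_cases h2 : z = v
    · subst z; rw [hrawv]; norm_num
    · exact (hmem2 z hz h1 h2).1.le
  have hbot : ∀ z ∈ s, raw z ≤ -1 → z = u := by
    intro z hz h
    by_contra h1
    by_cases h2 : z = v
    · subst z; rw [hrawv] at h; norm_num at h
    · exact absurd h (not_le.mpr (hmem2 z hz h1 h2).1)
  have htop : ∀ z ∈ s, 1 ≤ raw z → z = v := by
    intro z hz h
    by_contra h2
    by_cases h1 : z = u
    · subst z; rw [hrawu] at h; norm_num at h
    · exact absurd h (not_le.mpr (hmem2 z hz h1 h2).2)
  have hFmem : ∀ x y : X, x ∈ s → y ∈ s → F x y ∈ s := by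
    intro x y hx hy
    rcases hQ x y with h | h <;> rw [h] <;> assumption
  refine ⟨fun x => sqz (raw x), ?_, fun z hz => sqz_mem _, ?_⟩
  · -- injective
    intro x hx y hy hxy
    simp only at hxy
    have he : raw x = raw y := sqz_strictMono.injective hxy
    by_cases h1 : x = u
    · subst x
      rw [hrawu] at he
      exact (hbot y hy he.symm.le).symm
    by_cases h2 : x = v
    · subst x
      rw [hrawv] at he
      exact (htop y hy he.le).symm
    have hyu : y ≠ u := by
      rintro rfl
      rw [hrawu] at he
      exact h1 (hbot x hx he.le)
    have hyv : y ≠ v := by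
      rintro rfl
      rw [hrawv] at he
      exact h2 (htop x hx he.ge)
    rw [hrawne x h1 h2, hrawne y hyu hyv] at he
    exact hinj' (Finset.mem_coe.mpr (hmemer x hx h1 h2))
      (Finset.mem_coe.mpr (hmemer y hy hyu hyv)) he
  · -- monotone
    intro x hx x' hx' y hy y' hy' h1 h2
    rw [sqz_le_iff] at h1 h2 ⊢
    by_cases hc1 : F x' y' = v
    · rw [hc1, hrawv]; exact hle1 _ (hFmem x y hx hy)
    by_cases hc2 : F x y = u
    · rw [hc2, hrawu]; exact hge1 _ (hFmem x' y' hx' hy')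
    -- F x y ≠ v
    have hc3 : F x y ≠ v := by
      intro hv
      rcases hQ x y with he | he
      · -- x = v
        have hxv : x = v := by rw [he] at hv; exact hv
        subst x
        have hx'v : x' = v := htop x' hx' (by rw [hrawv] at h1; exact h1)
        subst x'
        -- F v y' ≠ v, so F v y' = u with y' = u
        have hy'u : y' = u := by
          by_contra h4
          by_cases h5 : y' = v
          · subst y'; exact hc1 (idem hQ v)
          · exact hc1 ((hb y' hy' h4 h5).2).2
        subst y'
        have hyu : y = u := hbot y hy (by rw [hrawu] at h2; exact h2)
        subst y
        -- F v u = v : contradiction with hc1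
        rcases hQ v u with h6 | h6
        · exact hc1 h6
        · rw [he] at h6; exact huv h6.symm
      · -- y = v
        have hyv : y = v := by rw [he] at hv; exact hv
        subst y
        have hy'v : y' = v := htop y' hy' (by rw [hrawv] at h2; exact h2)
        subst y'
        have hx'u : x' = u := by
          by_contra h4
          by_cases h5 : x' = v
          · subst x'; exact hc1 (idem hQ v)
          · exact hc1 ((hb x' hx' h4 h5).2).1
        subst x'
        have hxu : x = u := hbot x hx (by rw [hrawu] at h1; exact h1)
        subst x
        rcases hQ u v with h6 | h6
        · rw [he] at h6; exact huv h6.symm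
        · exact hc1 h6
    -- F x' y' ≠ u
    have hc4 : F x' y' ≠ u := by
      intro hu'
      rcases hQ x' y' with he | he
      · have hx'u : x' = u := by rw [he] at hu'; exact hu'
        subst x'
        have hxu : x = u := hbot x hx (by rw [hrawu] at h1; exact h1)
        subst x
        rcases k1 y hy with h | h
        · exact hc2 h
        · exact hc3 h
      · have hy'u : y' = u := by rw [he] at hu'; exact hu'
        subst y'
        have hyu : y = u := hbot y hy (by rw [hrawu] at h2; exact h2)
        subst y
        rcases k2 x hx with h | h
        · exact hc2 h
        · exact hc3 h
    -- now all elements avoid u and v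
    have hxuv : x ≠ u ∧ x ≠ v := by
      constructor
      · rintro rfl
        rcases k1 y hy with h | h
        · exact hc2 h
        · exact hc3 h
      · rintro rfl
        rcases k3 y hy with h | h
        · exact hc3 h
        · exact hc2 h
    have hyuv : y ≠ u ∧ y ≠ v := by
      constructor
      · rintro rfl
        rcases k2 x hx with h | h
        · exact hc2 h
        · exact hc3 h
      · rintro rfl
        rcases k4 x hx with h | h
        · exact hc3 h
        · exact hc2 h
    have hx'uv : x' ≠ u ∧ x' ≠ v := by
      constructor
      · rintro rfl
        rcases k1 y' hy' with h | h
        · exact hc4 h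
        · exact hc1 h
      · rintro rfl
        rcases k3 y' hy' with h | h
        · exact hc1 h
        · exact hc4 h
    have hy'uv : y' ≠ u ∧ y' ≠ v := by
      constructor
      · rintro rfl
        rcases k2 x' hx' with h | h
        · exact hc4 h
        · exact hc1 h
      · rintro rfl
        rcases k4 x' hx' with h | h
        · exact hc1 h
        · exact hc4 h
    have hFxy : F x y ∈ s := hFmem x y hx hy
    have hFx'y' : F x' y' ∈ s := hFmem x' y' hx' hy'
    rw [hrawne _ hc2 hc3, hrawne _ hc4 hc1]
    rw [hrawne x hxuv.1 hxuv.2, hrawne x' hx'uv.1 hx'uv.2] at h1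
    rw [hrawne y hyuv.1 hyuv.2, hrawne y' hy'uv.1 hy'uv.2] at h2
    exact hmono' x (hmemer x hx hxuv.1 hxuv.2) x' (hmemer x' hx' hx'uv.1 hx'uv.2)
      y (hmemer y hy hyuv.1 hyuv.2) y' (hmemer y' hy' hy'uv.1 hy'uv.2) h1 h2

end Steps


section Main
variable {X : Type*} {F : X → X → X}

lemma exists_good [Finite X] (hA : Assoc F) (hQ : Quasitrivial F)
    (hT : TwoQuasilinear (wle F)) :
    ∀ n : ℕ, ∀ s : Finset X, s.card ≤ n → ∃ f : X → ℚ, GoodOn F s f := by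
  intro n
  induction n with
  | zero =>
    intro s hs
    have : s = ∅ := Finset.card_eq_zero.mp (Nat.le_zero.mp hs)
    subst this
    exact ⟨fun _ => 0, by simp [GoodOn, Set.InjOn]⟩
  | succ n ih =>
    intro s hcard
    classical
    rcases s.eq_empty_or_nonempty with rfl | hne
    · exact ⟨fun _ => 0, by simp [GoodOn, Set.InjOn]⟩
    obtain ⟨t, hts, htmax⟩ := exists_max hA hQ hne
    by_cases hall : ∀ x ∈ s, wle F t x
    · -- s is a single ∼-class
      have hsim : ∀ x ∈ s, ∀ y ∈ s, wle F x y := fun x hx y hy =>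
        wle_trans hA hQ (htmax x hx) (hall y hy)
      obtain ⟨m, ⟨e⟩⟩ := Finite.exists_equiv_fin X
      set g : X → ℚ := fun x => ((e x : Fin m) : ℕ) with hgdef
      have hg : Function.Injective g := by
        intro a b h
        apply e.injective
        exact Fin.val_injective (Nat.cast_injective h)
      refine ⟨sqz ∘ g, (sqz_strictMono.injective.comp hg).injOn, fun z hz => sqz_mem _, ?_⟩
      intro x hx x' hx' y hy y' hy' h1 h2
      rcases class_proj hA hQ hsim with hpi | hpi
      · rw [hpi x hx y hy, hpi x' hx' y' hy']; exact h1
      · rw [hpi x hx y hy, hpi x' hx' y' hy']; exact h2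
    · push_neg at hall
      obtain ⟨a, has, hta⟩ := hall
      set C : Finset X := s.filter (fun x => wle F t x) with hC
      have htC : t ∈ C := Finset.mem_filter.mpr ⟨hts, wle_refl hQ t⟩
      have hCs : ∀ z ∈ C, z ∈ s ∧ wle F t z := fun z hz => Finset.mem_filter.mp hz
      have hCcard : C.card ≤ 2 := by
        by_contra hgt
        push_neg at hgt
        have h1 : 1 < (C.erase t).card := by
          rw [Finset.card_erase_of_mem htC]; omega
        obtain ⟨c, hc, d, hd, hcd⟩ := Finset.one_lt_card.mp h1
        have hc' := Finset.mem_erase.mp hc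
        have hd' := Finset.mem_erase.mp hd
        have hcC := hCs c hc'.2
        have hdC := hCs d hd'.2
        have haC : a ∉ C := fun h => hta (hCs a h).2
        apply hT
        refine ⟨a, t, c, d, ⟨?_, ?_, ?_, hc'.1.symm, hd'.1.symm, hcd⟩, ?_, ?_, ?_⟩
        · rintro rfl; exact haC htC
        · rintro rfl; exact haC hc'.2
        · rintro rfl; exact haC hd'.2
        · exact ⟨htmax a has, hta⟩
        · exact ⟨hcC.2, htmax c hcC.1⟩
        · exact ⟨wle_trans hA hQ (htmax c hcC.1) hdC.2,
            wle_trans hA hQ (htmax d hdC.1) hcC.2⟩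
      have hC1 : 1 ≤ C.card := Finset.card_pos.mpr ⟨t, htC⟩
      interval_cases h : C.card
      · -- C = {t}
        have hCt : C = {t} := by
          obtain ⟨w, hw⟩ := Finset.card_eq_one.mp h
          have htw : t = w := Finset.mem_singleton.mp (hw ▸ htC)
          rw [hw, htw]
        have hb : ∀ w ∈ s, F t w = t ∧ F w t = t := by
          intro w hw
          by_cases hwt : w = t
          · subst w; exact ⟨idem hQ t, idem hQ t⟩
          · have hnot : ¬ wle F t w := by
              intro hcon
              have : w ∈ C := Finset.mem_filter.mpr ⟨hw, hcon⟩
              rw [hCt] at this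
              exact hwt (Finset.mem_singleton.mp this)
            have := lt_absorb hQ (htmax w hw) hnot
            exact ⟨this.2, this.1⟩
        obtain ⟨f', hf'⟩ := ih (s.erase t)
          (by
            have := Finset.card_erase_of_mem hts
            omega)
        exact step_top1 hQ hts hb hf'
      · -- C = {u, v}
        obtain ⟨u, v, huv, hCuv⟩ := Finset.card_eq_two.mp h
        have huC : u ∈ C := by rw [hCuv]; simp
        have hvC : v ∈ C := by rw [hCuv]; simp
        have hus := (hCs u huC).1
        have hvs := (hCs v hvC).1
        have hb : ∀ w ∈ s, w ≠ u → w ≠ v →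
            (F w u = u ∧ F u w = u) ∧ (F w v = v ∧ F v w = v) := by
          intro w hw h1 h2
          have hwC : w ∉ C := by
            rw [hCuv]
            simp [h1, h2]
          have hnt : ¬ wle F t w := fun hcon => hwC (Finset.mem_filter.mpr ⟨hw, hcon⟩)
          have hnu : ¬ wle F u w := fun hcon =>
            hnt (wle_trans hA hQ (hCs u huC).2 hcon)
          have hnv : ¬ wle F v w := fun hcon =>
            hnt (wle_trans hA hQ (hCs v hvC).2 hcon)
          have hwu : wle F w u := wle_trans hA hQ (htmax w hw) (hCs u huC).2
          have hwv : wle F w v := wle_trans hA hQ (htmax w hw) (hCs v hvC).2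
          exact ⟨lt_absorb hQ hwu hnu, lt_absorb hQ hwv hnv⟩
        obtain ⟨f', hf'⟩ := ih ((s.erase u).erase v)
          (by
            have h1 := Finset.card_erase_of_mem hus
            have h2 : ((s.erase u).erase v).card ≤ (s.erase u).card :=
              Finset.card_erase_le
            omega)
        exact step_top2 hQ hus hvs huv hb hf'

end Main


theorem stmt_14 {X : Type*} [Finite X] (F : X → X → X)
    (hA : Assoc F) (hQ : Quasitrivial F) :
    (∃ le : X → X → Prop, IsLinearOrder X le ∧
        ∀ x x' y y' : X, le x x' → le y y' → le (F x y) (F x' y')) ↔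
      TwoQuasilinear (wle F) := by
  constructor
  · rintro ⟨le, hlin, hmono⟩
    rintro ⟨a, b, c, d, ⟨hab, hac, had, hbc, hbd, hcd⟩,
      ⟨hab1, hab2⟩, ⟨hbc1, hbc2⟩, ⟨hcd1, hcd2⟩⟩
    have htot : ∀ x y : X, le x y ∨ le y x := hlin.toTotal.total
    have hanti : ∀ x y : X, le x y → le y x → x = y :=
      hlin.toIsPartialOrder.toAntisymm.antisymm
    have hrefl : ∀ x : X, le x x := hlin.toIsPartialOrder.toIsPreorder.toRefl.refl
    have hac' : wle F a c := wle_trans hA hQ hab1 hbc1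
    have hca' : ¬ wle F c a := fun h => hab2 (wle_trans hA hQ hbc1 h)
    have had' : wle F a d := wle_trans hA hQ hac' hcd1
    have hda' : ¬ wle F d a := fun h => hca' (wle_trans hA hQ hcd1 h)
    have Hb := lt_absorb hQ hab1 hab2
    have Hc := lt_absorb hQ hac' hca'
    have Hd := lt_absorb hQ had' hda'
    have key1 : ∀ u v : X, u ≠ v → wle F u v → wle F v u →
        F a u = u → F u a = u → F a v = v → F v a = v →
        le a u → le a v → False := by
      intro u v hne h1 h2 e1 e2 e3 e4 sau sav
      have m1 := hmono u u a v (hrefl u) sav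
      have m2 := hmono v v a u (hrefl v) sau
      have m3 := hmono a v u u sav (hrefl u)
      have m4 := hmono a u v v sau (hrefl v)
      rw [e2] at m1
      rw [e4] at m2
      rw [e1] at m3
      rw [e3] at m4
      rcases sim_pair hQ h1 h2 with ⟨p1, p2⟩ | ⟨p1, p2⟩
      · rw [p1] at m1; rw [p2] at m2; exact hne (hanti u v m1 m2)
      · rw [p1] at m4; rw [p2] at m3; exact hne (hanti u v m3 m4)
    have key2 : ∀ u v : X, u ≠ v → wle F u v → wle F v u →
        F a u = u → F u a = u → F a v = v → F v a = v →
        le u a → le v a → False := by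
      intro u v hne h1 h2 e1 e2 e3 e4 sua sva
      have m1 := hmono u u v a (hrefl u) sva
      have m2 := hmono v v u a (hrefl v) sua
      have m3 := hmono u a v v sua (hrefl v)
      have m4 := hmono v a u u sva (hrefl u)
      rw [e2] at m1
      rw [e4] at m2
      rw [e3] at m3
      rw [e1] at m4
      rcases sim_pair hQ h1 h2 with ⟨p1, p2⟩ | ⟨p1, p2⟩
      · rw [p1] at m1; rw [p2] at m2; exact hne (hanti u v m2 m1)
      · rw [p1] at m3; rw [p2] at m4; exact hne (hanti u v m3 m4)
    have hbd1 : wle F b d := wle_trans hA hQ hbc1 hcd1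
    have hbd2 : wle F d b := wle_trans hA hQ hcd2 hbc2
    rcases htot a b with s1 | s1 <;> rcases htot a c with s2 | s2 <;>
      rcases htot a d with s3 | s3
    · exact key1 b c hbc hbc1 hbc2 Hb.1 Hb.2 Hc.1 Hc.2 s1 s2
    · exact key1 b c hbc hbc1 hbc2 Hb.1 Hb.2 Hc.1 Hc.2 s1 s2
    · exact key1 b d hbd hbd1 hbd2 Hb.1 Hb.2 Hd.1 Hd.2 s1 s3
    · exact key2 c d hcd hcd1 hcd2 Hc.1 Hc.2 Hd.1 Hd.2 s2 s3
    · exact key1 c d hcd hcd1 hcd2 Hc.1 Hc.2 Hd.1 Hd.2 s2 s3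
    · exact key2 b d hbd hbd1 hbd2 Hb.1 Hb.2 Hd.1 Hd.2 s1 s3
    · exact key2 b c hbc hbc1 hbc2 Hb.1 Hb.2 Hc.1 Hc.2 s1 s2
    · exact key2 b c hbc hbc1 hbc2 Hb.1 Hb.2 Hc.1 Hc.2 s1 s2
  · intro hT
    classical
    have : Fintype X := Fintype.ofFinite X
    obtain ⟨f, hinj, hmem, hmono⟩ :=
      exists_good hA hQ hT Finset.univ.card Finset.univ le_rfl
    refine ⟨fun x y => f x ≤ f y, ?_, ?_⟩
    · exact { refl := fun x => le_refl _
              trans := fun a b c => le_trans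
              antisymm := fun a b h1 h2 => hinj (by simp) (by simp) (le_antisymm h1 h2)
              total := fun a b => le_total _ _ }
    · intro x x' y y' h1 h2
      exact hmono x (by simp) x' (by simp) y (by simp) y' (by simp) h1 h2
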